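/- Reduction theorem (case n > d): let X ∈ ℝ^{d×n} with SVD X = UDV' (U ∈ ℝ^{d×d}, V ∈ ℝ^{n×d}, U'U = V'V = I), Σ = (1/n)XX'. Then for every Θ ≻ 0 and H ∈ ℝ^{d×d}, c(Θ, √n·HUV'; X) equals g(Θ,H), and for every L ∈ ℝ^{d×n}, c(Θ,L;X) ≥ g(Θ, (1/√n)LVU'), where g(Θ,H) = (1/2)tr(H'Θ⁻¹H) − (1/2)log det Θ − tr(H'√Σ) + (1/2)tr(ΘΣ) + λ‖Θ‖_{ℓ1} + γ√n‖H‖_⋆. -/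

import Mathlib

open Matrix Real MeasureTheory

theorem Matrix.isHermitian_transpose_mul_self {m n : Type*} [Fintype m] (A : Matrix m n ℝ) :
    (Aᵀ * A).IsHermitian := by
  simpa using Matrix.isHermitian_conjTranspose_mul_self A

noncomputable def Matrix.PosSemidef.sqrt {n : Type*} [Fintype n] [DecidableEq n]
    {A : Matrix n n ℝ} (hA : Matrix.PosSemidef A) : Matrix n n ℝ :=
  hA.1.eigenvectorUnitary.1 * diagonal ((↑) ∘ (√·) ∘ hA.1.eigenvalues) *
    (star hA.1.eigenvectorUnitary : Matrix n n ℝ)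

noncomputable def nuclearNorm {k l : ℕ} (A : Matrix (Fin k) (Fin l) ℝ) : ℝ :=
  ∑ i, Real.sqrt ((Matrix.isHermitian_transpose_mul_self A).eigenvalues i)

noncomputable def spectralNorm' {k l : ℕ} (A : Matrix (Fin k) (Fin l) ℝ) : ℝ :=
  ⨆ i, Real.sqrt ((Matrix.isHermitian_transpose_mul_self A).eigenvalues i)

noncomputable def l1Norm {k l : ℕ} (A : Matrix (Fin k) (Fin l) ℝ) : ℝ := ∑ i, ∑ j, |A i j|

/-- The Gaussian objective `c(Θ, L; X)` with normalization constant `n`. -/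
noncomputable def cObj {d : ℕ} (n : ℕ) (lam gam : ℝ) {k : ℕ} (Θ : Matrix (Fin d) (Fin d) ℝ)
    (L X : Matrix (Fin d) (Fin k) ℝ) : ℝ :=
  (1 / (2 * n)) * (Lᵀ * Θ⁻¹ * L).trace - (1/2) * Real.log Θ.det
    - (1 / n) * (Lᵀ * X).trace + (1 / (2 * n)) * (Θ * (X * Xᵀ)).trace
    + lam * l1Norm Θ + gam * nuclearNorm L

/-- The reduced objective `g(Θ, H)` with sample covariance `S` and its PSD square root `sqrtS`. -/
noncomputable def gObj {d : ℕ} (n : ℕ) (lam gam : ℝ)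
    (S sqrtS Θ H : Matrix (Fin d) (Fin d) ℝ) : ℝ :=
  (1/2) * (Hᵀ * Θ⁻¹ * H).trace - (1/2) * Real.log Θ.det - (Hᵀ * sqrtS).trace
    + (1/2) * (Θ * S).trace + lam * l1Norm Θ + gam * Real.sqrt n * nuclearNorm H

namespace RedAux

variable {k l m : ℕ}

lemma ct_eq_t {a b : ℕ} (A : Matrix (Fin a) (Fin b) ℝ) : Aᴴ = Aᵀ :=
  Matrix.conjTranspose_eq_transpose_of_trivial A

lemma psd_smul {A : Matrix (Fin k) (Fin k) ℝ} (hA : A.PosSemidef) {c : ℝ} (hc : 0 ≤ c) :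
    (c • A).PosSemidef := by
  exact hA.smul hc

lemma psd_one_sub {a b : ℕ} (W : Matrix (Fin a) (Fin b) ℝ) (hW : Wᵀ * W = 1) :
    (1 - W * Wᵀ).PosSemidef := by
  have key : (1 - W * Wᵀ)ᴴ * (1 - W * Wᵀ) = 1 - W * Wᵀ := by
    have h2 : W * Wᵀ * (W * Wᵀ) = W * Wᵀ := by
      rw [Matrix.mul_assoc, ← Matrix.mul_assoc Wᵀ W Wᵀ, hW, Matrix.one_mul]
    rw [ct_eq_t, transpose_sub, transpose_one, transpose_mul, transpose_transpose,
      Matrix.sub_mul, Matrix.mul_sub, Matrix.mul_sub, Matrix.one_mul, Matrix.mul_one, h2]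
    simp
  have := Matrix.posSemidef_conjTranspose_mul_self (1 - W * Wᵀ)
  rwa [key] at this

lemma psd_diag_nonneg {A : Matrix (Fin k) (Fin k) ℝ} (hA : A.PosSemidef) (i : Fin k) :
    0 ≤ A i i := by
  exact hA.diag_nonneg

lemma trace_psd_nonneg {A : Matrix (Fin k) (Fin k) ℝ} (hA : A.PosSemidef) : 0 ≤ A.trace := by
  have : A.trace = ∑ i, A i i := rfl
  rw [this]
  exact Finset.sum_nonneg fun i _ => psd_diag_nonneg hA i

section
open scoped MatrixOrder

lemma psd_sqrt_eq_cfc {A : Matrix (Fin k) (Fin k) ℝ} (hA : A.PosSemidef) :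
    hA.sqrt = CFC.sqrt A := by
  rw [CFC.sqrt_eq_real_sqrt A hA.nonneg, cfcₙ_eq_cfc, hA.1.cfc_eq, Matrix.IsHermitian.cfc,
    Unitary.conjStarAlgAut_apply]
  rfl

lemma psd_sqrt_unique {A B : Matrix (Fin k) (Fin k) ℝ} (hA : A.PosSemidef) (hB : B.PosSemidef)
    (h : B ^ 2 = A) : hA.sqrt = B := by
  rw [psd_sqrt_eq_cfc, ← h]
  exact CFC.sqrt_sq B hB.nonneg

lemma trace_mul_psd_nonneg {A B : Matrix (Fin k) (Fin k) ℝ} (hA : A.PosSemidef)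
    (hB : B.PosSemidef) : 0 ≤ (A * B).trace := by
  have h1 : A * B = CFC.sqrt A * (CFC.sqrt A * B) := by
    rw [← Matrix.mul_assoc, CFC.sqrt_mul_sqrt_self A hA.nonneg]
  rw [h1, trace_mul_comm]
  have hpsd : ((CFC.sqrt A * B) * CFC.sqrt A).PosSemidef := by
    have h2 := hB.mul_mul_conjTranspose_same (CFC.sqrt A)
    rwa [(CFC.sqrt_nonneg A).posSemidef.1.eq] at h2
  exact trace_psd_nonneg hpsd

end

lemma trace_conj_semiorth {a b : ℕ} (W : Matrix (Fin a) (Fin b) ℝ) (hW : Wᵀ * W = 1)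
    (M : Matrix (Fin b) (Fin b) ℝ) : (W * M * Wᵀ).trace = M.trace := by
  rw [trace_mul_cycle, hW, Matrix.one_mul]

end RedAux

namespace RedAux

/-- Dual feasibility bound: if `1 - FᵀF ⪰ 0` then `tr(FᵀL) ≤ ‖L‖⋆`. -/
lemma trace_le_nuclear {a b : ℕ} (L F : Matrix (Fin a) (Fin b) ℝ)
    (hF : (1 - Fᵀ * F).PosSemidef) : (Fᵀ * L).trace ≤ nuclearNorm L := by
  have hA : (Lᵀ * L).IsHermitian := Matrix.isHermitian_transpose_mul_self L
  set ev : Fin b → ℝ := Matrix.IsHermitian.eigenvalues hA with hev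
  set R : Matrix (Fin b) (Fin b) ℝ :=
    (Matrix.IsHermitian.eigenvectorUnitary hA : Matrix (Fin b) (Fin b) ℝ) with hRdef
  have hRtR : Rᵀ * R = 1 := by
    have := (Matrix.IsHermitian.eigenvectorUnitary hA).2
    rw [Matrix.mem_unitaryGroup_iff'] at this
    rw [← ct_eq_t]; exact this
  have hRRt : R * Rᵀ = 1 := by
    have := (Matrix.IsHermitian.eigenvectorUnitary hA).2
    rw [Matrix.mem_unitaryGroup_iff] at this
    rw [← ct_eq_t]; exact this
  have hspec : Lᵀ * L = R * Matrix.diagonal ev * Rᵀ := by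
    have := hA.spectral_theorem
    rw [Unitary.conjStarAlgAut_apply, Matrix.star_eq_conjTranspose, ct_eq_t] at this
    convert this using 3 <;> rfl
  have hnn : ∀ i, 0 ≤ ev i := by
    intro i
    rw [hev]
    exact (Matrix.posSemidef_conjTranspose_mul_self L).eigenvalues_nonneg i
  set G := F * R with hG
  set M := L * R with hM
  -- trace identity
  have htr : (Fᵀ * L).trace = (Gᵀ * M).trace := by
    have hGM : Gᵀ * M = Rᵀ * ((Fᵀ * L) * R) := by
      rw [hG, hM, transpose_mul]
      simp only [Matrix.mul_assoc]
    have h2 : (Rᵀ * ((Fᵀ * L) * R)).trace = (Fᵀ * L).trace := by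
      rw [trace_mul_comm, Matrix.mul_assoc (Fᵀ * L) R Rᵀ, hRRt, Matrix.mul_one]
    rw [hGM, h2]
  -- column norms of M
  have hMM : Mᵀ * M = Matrix.diagonal ev := by
    have h1 : Mᵀ * M = Rᵀ * (Lᵀ * L) * R := by
      rw [hM, transpose_mul]
      simp only [Matrix.mul_assoc]
    rw [h1, hspec]
    simp only [Matrix.mul_assoc]
    rw [hRtR, Matrix.mul_one, ← Matrix.mul_assoc, hRtR, Matrix.one_mul]
  have hGG : ∀ i, (Gᵀ * G) i i ≤ 1 := by
    intro i
    have hpsd : (Rᵀ * (1 - Fᵀ * F) * R).PosSemidef := by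
      have := hF.conjTranspose_mul_mul_same R
      rwa [ct_eq_t] at this
    have h0 := psd_diag_nonneg hpsd i
    have heq : Rᵀ * (1 - Fᵀ * F) * R = 1 - Gᵀ * G := by
      have h3 : Gᵀ * G = Rᵀ * (Fᵀ * F) * R := by
        rw [hG, transpose_mul]
        simp only [Matrix.mul_assoc]
      rw [Matrix.mul_sub, Matrix.mul_one, Matrix.sub_mul, hRtR, h3]
    rw [heq] at h0
    have : (1 - Gᵀ * G : Matrix (Fin b) (Fin b) ℝ) i i = 1 - (Gᵀ * G) i i := by
      simp [Matrix.sub_apply, Matrix.one_apply_eq]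
    rw [this] at h0
    linarith
  -- entrywise expansion and Cauchy-Schwarz
  have hexp : (Gᵀ * M).trace = ∑ i, ∑ j, G j i * M j i := by
    rw [Matrix.trace]
    congr 1
  have hbound : ∀ i, ∑ j, G j i * M j i ≤ Real.sqrt (ev i) := by
    intro i
    have hcs := Real.sum_mul_le_sqrt_mul_sqrt Finset.univ (fun j => G j i) (fun j => M j i)
    have hg2 : ∑ j, G j i ^ 2 = (Gᵀ * G) i i := by
      simp [Matrix.mul_apply, Matrix.transpose_apply, sq]
    have hm2 : ∑ j, M j i ^ 2 = ev i := by
      have : (Mᵀ * M) i i = ev i := by rw [hMM]; simp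
      rw [← this]
      simp [Matrix.mul_apply, Matrix.transpose_apply, sq]
    calc ∑ j, G j i * M j i
        ≤ Real.sqrt (∑ j, G j i ^ 2) * Real.sqrt (∑ j, M j i ^ 2) := hcs
      _ ≤ 1 * Real.sqrt (ev i) := by
          rw [hm2]
          apply mul_le_mul_of_nonneg_right _ (Real.sqrt_nonneg _)
          rw [hg2]
          exact Real.sqrt_le_one.2 (hGG i)
      _ = Real.sqrt (ev i) := one_mul _
  calc (Fᵀ * L).trace = ∑ i, ∑ j, G j i * M j i := by rw [htr, hexp]
    _ ≤ ∑ i, Real.sqrt (ev i) := Finset.sum_le_sum fun i _ => hbound i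
    _ = nuclearNorm L := by rw [hev]; rfl

/-- Achievement: the nuclear norm is attained as `tr(EᵀA)` for a dual-feasible `E`. -/
lemma nuclear_achieve {a b : ℕ} (A : Matrix (Fin a) (Fin b) ℝ) :
    ∃ E : Matrix (Fin a) (Fin b) ℝ, (1 - Eᵀ * E).PosSemidef ∧ (Eᵀ * A).trace = nuclearNorm A := by
  have hA : (Aᵀ * A).IsHermitian := Matrix.isHermitian_transpose_mul_self A
  set ev : Fin b → ℝ := Matrix.IsHermitian.eigenvalues hA with hev
  set R : Matrix (Fin b) (Fin b) ℝ :=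
    (Matrix.IsHermitian.eigenvectorUnitary hA : Matrix (Fin b) (Fin b) ℝ) with hRdef
  have hRtR : Rᵀ * R = 1 := by
    have := (Matrix.IsHermitian.eigenvectorUnitary hA).2
    rw [Matrix.mem_unitaryGroup_iff'] at this
    rw [← ct_eq_t]; exact this
  have hRRt : R * Rᵀ = 1 := by
    have := (Matrix.IsHermitian.eigenvectorUnitary hA).2
    rw [Matrix.mem_unitaryGroup_iff] at this
    rw [← ct_eq_t]; exact this
  have hspec : Aᵀ * A = R * Matrix.diagonal ev * Rᵀ := by
    have := hA.spectral_theorem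
    rw [Unitary.conjStarAlgAut_apply, Matrix.star_eq_conjTranspose, ct_eq_t] at this
    convert this using 3 <;> rfl
  have hnn : ∀ i, 0 ≤ ev i := by
    intro i
    rw [hev]
    exact (Matrix.posSemidef_conjTranspose_mul_self A).eigenvalues_nonneg i
  set g : Fin b → ℝ := fun i => if ev i = 0 then 0 else (Real.sqrt (ev i))⁻¹ with hg
  set P : Matrix (Fin b) (Fin b) ℝ := R * Matrix.diagonal g * Rᵀ with hPdef
  have hPt : Pᵀ = P := by
    rw [hPdef]
    simp only [transpose_mul, transpose_transpose, Matrix.diagonal_transpose, Matrix.mul_assoc]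
  refine ⟨A * P, ?_, ?_⟩
  · -- feasibility
    have hEA : (A * P)ᵀ * (A * P) = R * Matrix.diagonal (fun i => g i * ev i * g i) * Rᵀ := by
      have h1 : (A * P)ᵀ * (A * P) = P * (Aᵀ * A) * P := by
        rw [transpose_mul, hPt]
        simp only [Matrix.mul_assoc]
      rw [h1, hspec, hPdef]
      simp only [Matrix.mul_assoc]
      rw [← Matrix.mul_assoc Rᵀ R, hRtR, Matrix.one_mul,
        ← Matrix.mul_assoc Rᵀ R, hRtR, Matrix.one_mul,
        ← Matrix.mul_assoc (Matrix.diagonal g) (Matrix.diagonal ev),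
        Matrix.diagonal_mul_diagonal,
        ← Matrix.mul_assoc (Matrix.diagonal (fun i => g i * ev i)) (Matrix.diagonal g),
        Matrix.diagonal_mul_diagonal]
    have hsub : (1 : Matrix (Fin b) (Fin b) ℝ) - (A * P)ᵀ * (A * P)
        = R * (1 - Matrix.diagonal (fun i => g i * ev i * g i)) * Rᵀ := by
      rw [hEA, Matrix.mul_sub, Matrix.mul_one, Matrix.sub_mul, hRRt]
    rw [hsub]
    have hdiag : (1 : Matrix (Fin b) (Fin b) ℝ) - Matrix.diagonal (fun i => g i * ev i * g i)
        = Matrix.diagonal (fun i => 1 - g i * ev i * g i) := by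
      rw [← Matrix.diagonal_one, ← Matrix.diagonal_sub]
    rw [hdiag]
    have hpsd : (Matrix.diagonal (fun i => 1 - g i * ev i * g i)).PosSemidef := by
      refine Matrix.PosSemidef.diagonal fun i => ?_
      by_cases h : ev i = 0
      · simp [hg, Pi.mul_apply, h]
      · have hlt : 0 < ev i := lt_of_le_of_ne (hnn i) (Ne.symm h)
        have hs : Real.sqrt (ev i) ≠ 0 := ne_of_gt (Real.sqrt_pos.2 hlt)
        have : g i * ev i * g i = 1 := by
          simp only [Pi.mul_apply, hg, if_neg h]
          rw [← Real.mul_self_sqrt (le_of_lt hlt)]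
          field_simp
          rw [Real.sqrt_sq (Real.sqrt_nonneg _)]
        rw [this]
        norm_num
    have := hpsd.mul_mul_conjTranspose_same R
    rwa [ct_eq_t] at this
  · -- value
    have hEA2 : (A * P)ᵀ * A = R * Matrix.diagonal (fun i => g i * ev i) * Rᵀ := by
      have h1 : (A * P)ᵀ * A = P * (Aᵀ * A) := by
        rw [transpose_mul, hPt]
        simp only [Matrix.mul_assoc]
      rw [h1, hspec, hPdef]
      simp only [Matrix.mul_assoc]
      rw [← Matrix.mul_assoc Rᵀ R, hRtR, Matrix.one_mul,
        ← Matrix.mul_assoc (Matrix.diagonal g) (Matrix.diagonal ev),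
        Matrix.diagonal_mul_diagonal]
    rw [hEA2, trace_conj_semiorth R hRtR, Matrix.trace_diagonal]
    have : ∀ i, g i * ev i = Real.sqrt (ev i) := by
      intro i
      by_cases h : ev i = 0
      · simp [hg, Pi.mul_apply, h]
      · have hlt : 0 < ev i := lt_of_le_of_ne (hnn i) (Ne.symm h)
        have hs : Real.sqrt (ev i) ≠ 0 := ne_of_gt (Real.sqrt_pos.2 hlt)
        simp only [Pi.mul_apply, hg, if_neg h]
        rw [← Real.mul_self_sqrt (le_of_lt hlt)]
        field_simp
        rw [Real.sqrt_sq (Real.sqrt_nonneg _)]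
    rw [Finset.sum_congr rfl fun i _ => this i]
    rw [hev]
    rfl

lemma nuclear_smul {a b : ℕ} (c : ℝ) (hc : 0 ≤ c) (A : Matrix (Fin a) (Fin b) ℝ) :
    nuclearNorm (c • A) = c * nuclearNorm A := by
  obtain ⟨E, hE, hEtr⟩ := nuclear_achieve A
  obtain ⟨E', hE', hEtr'⟩ := nuclear_achieve (c • A)
  apply le_antisymm
  · calc nuclearNorm (c • A) = (E'ᵀ * (c • A)).trace := hEtr'.symm
      _ = c * (E'ᵀ * A).trace := by rw [Matrix.mul_smul, trace_smul, smul_eq_mul]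
      _ ≤ c * nuclearNorm A := mul_le_mul_of_nonneg_left (trace_le_nuclear A E' hE') hc
  · calc c * nuclearNorm A = c * (Eᵀ * A).trace := by rw [hEtr]
      _ = (Eᵀ * (c • A)).trace := by rw [Matrix.mul_smul, trace_smul, smul_eq_mul]
      _ ≤ nuclearNorm (c • A) := trace_le_nuclear (c • A) E hE

lemma nuclear_mul_le {a b m : ℕ} (A : Matrix (Fin a) (Fin b) ℝ) (W : Matrix (Fin b) (Fin m) ℝ)
    (hW : (1 - W * Wᵀ).PosSemidef) : nuclearNorm (A * W) ≤ nuclearNorm A := by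
  obtain ⟨E, hE, hEtr⟩ := nuclear_achieve (A * W)
  set F := E * Wᵀ with hF
  have hfeas : (1 - Fᵀ * F).PosSemidef := by
    have h1 : (1 : Matrix (Fin b) (Fin b) ℝ) - Fᵀ * F
        = (1 - W * Wᵀ) + W * (1 - Eᵀ * E) * Wᵀ := by
      rw [hF, transpose_mul, transpose_transpose, Matrix.mul_sub, Matrix.mul_one,
        Matrix.sub_mul]
      have : W * (Eᵀ * E) * Wᵀ = W * Eᵀ * (E * Wᵀ) := by
        simp only [Matrix.mul_assoc]
      rw [this]
      abel
    rw [h1]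
    have h2 := hE.mul_mul_conjTranspose_same W
    rw [ct_eq_t] at h2
    exact hW.add h2
  have htr : (Fᵀ * A).trace = (Eᵀ * (A * W)).trace := by
    rw [hF, transpose_mul, transpose_transpose, Matrix.mul_assoc, trace_mul_comm,
      Matrix.mul_assoc]
  calc nuclearNorm (A * W) = (Fᵀ * A).trace := by rw [htr, hEtr]
    _ ≤ nuclearNorm A := trace_le_nuclear A F hfeas

end RedAux

namespace RedAux

lemma trace_conj_semiorth' {a b : ℕ} (W : Matrix (Fin a) (Fin b) ℝ) (hW : W * Wᵀ = 1)
    (M : Matrix (Fin a) (Fin a) ℝ) : (Wᵀ * M * W).trace = M.trace := by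
  rw [trace_mul_cycle, hW, Matrix.one_mul]

lemma quad_smul {p q : ℕ} (c : ℝ) (B : Matrix (Fin q) (Fin p) ℝ)
    (T : Matrix (Fin q) (Fin q) ℝ) :
    ((c • B)ᵀ * T * (c • B)).trace = (c * c) * (Bᵀ * T * B).trace := by
  rw [transpose_smul, Matrix.smul_mul, Matrix.smul_mul, Matrix.mul_smul, smul_smul, trace_smul,
    smul_eq_mul]

end RedAux


/-- Reduction theorem, case `n > d`. -/
theorem reduction_n_gt_d {d n : ℕ} (hdn : d < n) (lam gam : ℝ)
    (hlam : 0 ≤ lam) (hgam : 0 ≤ gam)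
    (X : Matrix (Fin d) (Fin n) ℝ) (U D : Matrix (Fin d) (Fin d) ℝ)
    (V : Matrix (Fin n) (Fin d) ℝ) (σ : Fin d → ℝ)
    (hSVD : X = U * D * Vᵀ) (hU : Uᵀ * U = 1) (hV : Vᵀ * V = 1)
    (hD : D = Matrix.diagonal σ) (hσ : ∀ i, 0 ≤ σ i)
    (hSig : (((n : ℝ)⁻¹) • (X * Xᵀ)).PosSemidef) :
    (∀ (Θ H : Matrix (Fin d) (Fin d) ℝ), Θ.PosDef →
      cObj n lam gam Θ (Real.sqrt n • (H * U * Vᵀ)) X =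
        gObj n lam gam (((n : ℝ)⁻¹) • (X * Xᵀ)) hSig.sqrt Θ H) ∧
    (∀ (Θ : Matrix (Fin d) (Fin d) ℝ) (L : Matrix (Fin d) (Fin n) ℝ), Θ.PosDef →
      gObj n lam gam (((n : ℝ)⁻¹) • (X * Xᵀ)) hSig.sqrt Θ
        ((Real.sqrt n)⁻¹ • (L * V * Uᵀ)) ≤ cObj n lam gam Θ L X) := by
  have hn0 : (0:ℝ) < n := by
    have : 0 < n := Nat.lt_of_le_of_lt (Nat.zero_le d) hdn
    exact_mod_cast this
  have hnne : (n:ℝ) ≠ 0 := ne_of_gt hn0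
  have hsn : Real.sqrt n * Real.sqrt n = (n:ℝ) := Real.mul_self_sqrt (le_of_lt hn0)
  have hsnn : (0:ℝ) ≤ Real.sqrt n := Real.sqrt_nonneg _
  have hsne : Real.sqrt (n:ℝ) ≠ 0 := ne_of_gt (Real.sqrt_pos.2 hn0)
  have hUUt : U * Uᵀ = 1 := mul_eq_one_comm.mp hU
  have hDt : Dᵀ = D := by rw [hD, Matrix.diagonal_transpose]
  have hXXt : X * Xᵀ = U * (D * D) * Uᵀ := by
    rw [hSVD]
    simp only [transpose_mul, transpose_transpose, Matrix.mul_assoc, hDt]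
    rw [← Matrix.mul_assoc Vᵀ V, hV, Matrix.one_mul]
  have hsqrtM : (((Real.sqrt n)⁻¹ • (U * D * Uᵀ)) : Matrix (Fin d) (Fin d) ℝ).PosSemidef := by
    apply RedAux.psd_smul _ (inv_nonneg.mpr hsnn)
    have hdiag : (Matrix.diagonal σ).PosSemidef := Matrix.posSemidef_diagonal_iff.mpr hσ
    have h2 := hdiag.mul_mul_conjTranspose_same U
    rw [RedAux.ct_eq_t] at h2
    rw [hD]
    exact h2
  have hsq : (((Real.sqrt n)⁻¹ • (U * D * Uᵀ)) : Matrix (Fin d) (Fin d) ℝ) ^ 2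
      = ((n : ℝ)⁻¹) • (X * Xᵀ) := by
    have hMM : (U * D * Uᵀ) * (U * D * Uᵀ) = X * Xᵀ := by
      rw [hXXt]
      simp only [Matrix.mul_assoc]
      rw [← Matrix.mul_assoc Uᵀ U, hU, Matrix.one_mul]
    rw [pow_two, smul_mul_assoc, mul_smul_comm, smul_smul, hMM, ← mul_inv, hsn]
  have hsqrt : hSig.sqrt = (Real.sqrt n)⁻¹ • (U * D * Uᵀ) :=
    RedAux.psd_sqrt_unique hSig hsqrtM hsq
  constructor
  · -- equality case
    intro Θ H hΘ
    have key1 : ((H*U*Vᵀ)ᵀ * Θ⁻¹ * (H*U*Vᵀ)).trace = (Hᵀ*Θ⁻¹*H).trace := by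
      have e1 : (H*U*Vᵀ)ᵀ * Θ⁻¹ * (H*U*Vᵀ) = V * (Uᵀ * (Hᵀ * Θ⁻¹ * H) * U) * Vᵀ := by
        simp only [transpose_mul, transpose_transpose, Matrix.mul_assoc]
      rw [e1, RedAux.trace_conj_semiorth V hV, RedAux.trace_conj_semiorth' U hUUt]
    have h1 : (1 / (2 * (n:ℝ))) * ((Real.sqrt (n:ℝ) • (H*U*Vᵀ))ᵀ * Θ⁻¹
          * (Real.sqrt (n:ℝ) • (H*U*Vᵀ))).trace
        = (1/2) * (Hᵀ * Θ⁻¹ * H).trace := by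
      rw [RedAux.quad_smul, hsn, key1]
      field_simp
    have key3 : ((H*U*Vᵀ)ᵀ * X).trace = (Hᵀ * (U * D * Uᵀ)).trace := by
      have e3 : (H*U*Vᵀ)ᵀ * X = V * (Uᵀ * (Hᵀ * (U * D))) * Vᵀ := by
        rw [hSVD]
        simp only [transpose_mul, transpose_transpose, Matrix.mul_assoc]
      rw [e3, RedAux.trace_conj_semiorth V hV, trace_mul_comm]
      congr 1
      simp only [Matrix.mul_assoc]
    have h3 : (1 / (n:ℝ)) * ((Real.sqrt (n:ℝ) • (H*U*Vᵀ))ᵀ * X).trace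
        = (Hᵀ * ((Real.sqrt (n:ℝ))⁻¹ • (U * D * Uᵀ))).trace := by
      rw [transpose_smul, Matrix.smul_mul, trace_smul, smul_eq_mul, key3,
        Matrix.mul_smul, trace_smul, smul_eq_mul]
      rw [← hsn]
      field_simp
      rw [Real.sqrt_sq hsnn]
    have h4 : (1 / (2 * (n:ℝ))) * (Θ * (X * Xᵀ)).trace
        = (1/2) * (Θ * (((n:ℝ)⁻¹) • (X * Xᵀ))).trace := by
      rw [Matrix.mul_smul, trace_smul, smul_eq_mul]
      field_simp
    have h6 : gam * nuclearNorm (Real.sqrt (n:ℝ) • (H*U*Vᵀ))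
        = gam * Real.sqrt (n:ℝ) * nuclearNorm H := by
      rw [RedAux.nuclear_smul _ hsnn]
      have hnuc : nuclearNorm (H*U*Vᵀ) = nuclearNorm H := by
        apply le_antisymm
        · have e : H * U * Vᵀ = H * (U * Vᵀ) := by simp only [Matrix.mul_assoc]
          rw [e]
          apply RedAux.nuclear_mul_le
          have e2 : (U * Vᵀ) * (U * Vᵀ)ᵀ = 1 := by
            rw [transpose_mul, transpose_transpose]
            simp only [Matrix.mul_assoc]
            rw [← Matrix.mul_assoc Vᵀ V Uᵀ, hV, Matrix.one_mul, hUUt]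
          rw [e2, sub_self]
          exact Matrix.PosSemidef.zero
        · have e : H = (H * U * Vᵀ) * (V * Uᵀ) := by
            simp only [Matrix.mul_assoc]
            rw [← Matrix.mul_assoc Vᵀ V Uᵀ, hV, Matrix.one_mul, hUUt, Matrix.mul_one]
          nth_rewrite 1 [e]
          apply RedAux.nuclear_mul_le
          have e2 : (V * Uᵀ) * (V * Uᵀ)ᵀ = V * Vᵀ := by
            rw [transpose_mul, transpose_transpose]
            simp only [Matrix.mul_assoc]
            rw [← Matrix.mul_assoc Uᵀ U Vᵀ, hU, Matrix.one_mul]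
          rw [e2]
          exact RedAux.psd_one_sub V hV
      rw [hnuc]
      ring
    simp only [cObj, gObj, hsqrt]
    linarith [h1, h3, h4, h6]
  · -- inequality case
    intro Θ L hΘ
    have hP : (Lᵀ * Θ⁻¹ * L).PosSemidef := by
      have h2 := (hΘ.inv.posSemidef).conjTranspose_mul_mul_same L
      rwa [RedAux.ct_eq_t] at h2
    have key1 : ((L*V*Uᵀ)ᵀ * Θ⁻¹ * (L*V*Uᵀ)).trace ≤ (Lᵀ * Θ⁻¹ * L).trace := by
      have e1 : (L*V*Uᵀ)ᵀ * Θ⁻¹ * (L*V*Uᵀ) = U * (Vᵀ * (Lᵀ * Θ⁻¹ * L) * V) * Uᵀ := by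
        simp only [transpose_mul, transpose_transpose, Matrix.mul_assoc]
      rw [e1, RedAux.trace_conj_semiorth U hU]
      have e2 : (Vᵀ * (Lᵀ * Θ⁻¹ * L) * V).trace = ((Lᵀ * Θ⁻¹ * L) * (V * Vᵀ)).trace := by
        rw [trace_mul_cycle, Matrix.mul_assoc, ← Matrix.mul_assoc, trace_mul_comm]
      have e3 : (Lᵀ * Θ⁻¹ * L).trace - ((Lᵀ * Θ⁻¹ * L) * (V * Vᵀ)).trace
          = ((Lᵀ * Θ⁻¹ * L) * (1 - V * Vᵀ)).trace := by
        rw [Matrix.mul_sub, Matrix.mul_one, trace_sub]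
      have e4 : 0 ≤ ((Lᵀ * Θ⁻¹ * L) * (1 - V * Vᵀ)).trace :=
        RedAux.trace_mul_psd_nonneg hP (RedAux.psd_one_sub V hV)
      linarith [e2.le, e2.ge]
    have g1 : (1/2 : ℝ) * (((Real.sqrt (n:ℝ))⁻¹ • (L*V*Uᵀ))ᵀ * Θ⁻¹
          * ((Real.sqrt (n:ℝ))⁻¹ • (L*V*Uᵀ))).trace
        ≤ (1 / (2 * (n:ℝ))) * (Lᵀ * Θ⁻¹ * L).trace := by
      rw [RedAux.quad_smul, ← mul_inv, hsn]
      have hcoef : (0:ℝ) ≤ (n:ℝ)⁻¹ := le_of_lt (inv_pos.2 hn0)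
      calc (1/2 : ℝ) * ((n:ℝ)⁻¹ * ((L*V*Uᵀ)ᵀ * Θ⁻¹ * (L*V*Uᵀ)).trace)
          ≤ (1/2 : ℝ) * ((n:ℝ)⁻¹ * (Lᵀ * Θ⁻¹ * L).trace) := by
            apply mul_le_mul_of_nonneg_left _ (by norm_num)
            exact mul_le_mul_of_nonneg_left key1 hcoef
        _ = (1 / (2 * (n:ℝ))) * (Lᵀ * Θ⁻¹ * L).trace := by
            field_simp
    have key3 : ((L*V*Uᵀ)ᵀ * (U * D * Uᵀ)).trace = (Lᵀ * X).trace := by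
      have e : (L*V*Uᵀ)ᵀ * (U * D * Uᵀ) = U * (Vᵀ * (Lᵀ * (U * D))) * Uᵀ := by
        simp only [transpose_mul, transpose_transpose, Matrix.mul_assoc]
      rw [e, RedAux.trace_conj_semiorth U hU, trace_mul_comm]
      have e2 : (Lᵀ * (U * D)) * Vᵀ = Lᵀ * X := by
        rw [hSVD]
        simp only [Matrix.mul_assoc]
      rw [e2]
    have g3 : ((((Real.sqrt (n:ℝ))⁻¹ • (L*V*Uᵀ))ᵀ) * ((Real.sqrt (n:ℝ))⁻¹ • (U * D * Uᵀ))).trace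
        = (1/(n:ℝ)) * (Lᵀ * X).trace := by
      rw [transpose_smul, Matrix.smul_mul, Matrix.mul_smul, trace_smul, trace_smul,
        smul_eq_mul, smul_eq_mul, key3, ← mul_assoc, ← mul_inv, hsn, inv_eq_one_div]
    have g4 : (1/2 : ℝ) * (Θ * (((n:ℝ)⁻¹) • (X * Xᵀ))).trace
        = (1 / (2 * (n:ℝ))) * (Θ * (X * Xᵀ)).trace := by
      rw [Matrix.mul_smul, trace_smul, smul_eq_mul]
      field_simp
    have g6 : gam * Real.sqrt (n:ℝ) * nuclearNorm ((Real.sqrt (n:ℝ))⁻¹ • (L*V*Uᵀ))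
        ≤ gam * nuclearNorm L := by
      rw [RedAux.nuclear_smul _ (inv_nonneg.mpr hsnn)]
      have hle : nuclearNorm (L*V*Uᵀ) ≤ nuclearNorm L := by
        have e : L * V * Uᵀ = L * (V * Uᵀ) := by simp only [Matrix.mul_assoc]
        rw [e]
        apply RedAux.nuclear_mul_le
        have e2 : (V * Uᵀ) * (V * Uᵀ)ᵀ = V * Vᵀ := by
          rw [transpose_mul, transpose_transpose]
          simp only [Matrix.mul_assoc]
          rw [← Matrix.mul_assoc Uᵀ U Vᵀ, hU, Matrix.one_mul]
        rw [e2]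
        exact RedAux.psd_one_sub V hV
      calc gam * Real.sqrt (n:ℝ) * ((Real.sqrt (n:ℝ))⁻¹ * nuclearNorm (L*V*Uᵀ))
          = gam * nuclearNorm (L*V*Uᵀ) := by
            field_simp
        _ ≤ gam * nuclearNorm L := mul_le_mul_of_nonneg_left hle hgam
    simp only [cObj, gObj, hsqrt]
    linarith [g1, g3, g4, g6]
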